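/- For every a > 1, every ε ∈ Σ, and every n ≥ 2, writing T_n(a,b) = r₀(ε)(a,b) · r₁(ε)(a,b) ⋯ r_n(ε)(a,b), the derivative of b ↦ T_n(a,b) at b = 0 equals -(1/a^{n+3}) · ( Σ_{i=0}^{n-1} (ε₀ε₁⋯εₙ with the two factors ε_i and ε_{i+1} omitted) + (ε₀ε₁⋯εₙ₊₁ with the factor εₙ omitted) ). -/

import Mathlib

open Filter

/-- Depth-`k` truncation of the continued fraction
`r_n(ε)(a,b) = 1/(aε_n + b/(aε_{n+1} + b/(aε_{n+2} + ⋯)))`. -/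
noncomputable def rTrunc (a b : ℝ) (ε : ℤ → ℝ) : ℕ → ℤ → ℝ
  | 0, n => 1 / (a * ε n)
  | k + 1, n => 1 / (a * ε n + b * rTrunc a b ε k (n + 1))

/-- The continued fraction `r_n(ε)(a,b)`, as the limit of its finite truncations. -/
noncomputable def rCF (a b : ℝ) (ε : ℤ → ℝ) (n : ℤ) : ℝ :=
  limUnder atTop (fun k => rTrunc a b ε k n)

/-- Depth-`k` truncation of the continued fraction
`s_n(ε)(a,b) = 1/(-aε_n + b/(-aε_{n-1} + b/(-aε_{n-2} + ⋯)))`. -/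
noncomputable def sTrunc (a b : ℝ) (ε : ℤ → ℝ) : ℕ → ℤ → ℝ
  | 0, n => 1 / (-(a * ε n))
  | k + 1, n => 1 / (-(a * ε n) + b * sTrunc a b ε k (n - 1))

/-- The continued fraction `s_n(ε)(a,b)`, as the limit of its finite truncations. -/
noncomputable def sCF (a b : ℝ) (ε : ℤ → ℝ) (n : ℤ) : ℝ :=
  limUnder atTop (fun k => sTrunc a b ε k n)

/-- `p(ε)(a,b) = 1 - b s₋₂ + b² s₋₂s₋₃ - b³ s₋₂s₋₃s₋₄ + ⋯`. -/
noncomputable def pFun (a b : ℝ) (ε : ℤ → ℝ) : ℝ :=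
  ∑' k : ℕ, (-b) ^ k * ∏ j ∈ Finset.range k, sCF a b ε (-2 - (j : ℤ))

/-- `q(ε)(a,b) = r₀ - r₀r₁ + r₀r₁r₂ - ⋯`. -/
noncomputable def qFun (a b : ℝ) (ε : ℤ → ℝ) : ℝ :=
  ∑' n : ℕ, (-1 : ℝ) ^ n * ∏ j ∈ Finset.range (n + 1), rCF a b ε (j : ℤ)

open Asymptotics Topology

section Aux

variable {a b : ℝ} {ε : ℤ → ℝ}

lemma eps_abs (hε : ∀ n : ℤ, ε n = 1 ∨ ε n = -1) (n : ℤ) : |ε n| = 1 := by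
  rcases hε n with h | h <;> rw [h] <;> norm_num

lemma eps_sq (hε : ∀ n : ℤ, ε n = 1 ∨ ε n = -1) (n : ℤ) : ε n * ε n = 1 := by
  rcases hε n with h | h <;> rw [h] <;> norm_num

lemma denom_ge (ha : 1 < a) (hε : ∀ n : ℤ, ε n = 1 ∨ ε n = -1) (hb : |b| ≤ a ^ 2 / 8)
    {x : ℝ} (hx : |x| ≤ 2 / a) (n : ℤ) : a / 2 ≤ |a * ε n + b * x| := by
  have ha0 : (0:ℝ) < a := lt_trans one_pos ha
  have h1 : |a * ε n| = a := by rw [abs_mul, eps_abs hε, mul_one, abs_of_pos ha0]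
  have h2 : |b * x| ≤ a / 4 := by
    rw [abs_mul]
    calc |b| * |x| ≤ (a ^ 2 / 8) * (2 / a) := by
          exact mul_le_mul hb hx (abs_nonneg x) (by positivity)
      _ = a / 4 := by field_simp; ring
  have h3 := abs_sub_abs_le_abs_sub (a * ε n) (-(b * x))
  rw [abs_neg, sub_neg_eq_add] at h3
  rw [h1] at h3
  linarith

lemma trunc_bound (ha : 1 < a) (hε : ∀ n : ℤ, ε n = 1 ∨ ε n = -1) (hb : |b| ≤ a ^ 2 / 8) :
    ∀ k (n : ℤ), |rTrunc a b ε k n| ≤ 2 / a := by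
  have ha0 : (0:ℝ) < a := lt_trans one_pos ha
  intro k
  induction k with
  | zero =>
    intro n
    rw [rTrunc, abs_div, abs_one, abs_mul, eps_abs hε, mul_one, abs_of_pos ha0]
    rw [div_le_div_iff₀ ha0 ha0]
    nlinarith
  | succ k ih =>
    intro n
    have hd := denom_ge ha hε hb (ih (n + 1)) n
    rw [rTrunc, abs_div, abs_one]
    rw [div_le_div_iff₀ (by linarith) ha0]
    nlinarith [abs_nonneg (a * ε n + b * rTrunc a b ε k (n + 1))]

lemma trunc_cauchy (ha : 1 < a) (hε : ∀ n : ℤ, ε n = 1 ∨ ε n = -1) (hb : |b| ≤ a ^ 2 / 8) :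
    ∀ k (n : ℤ), |rTrunc a b ε (k + 1) n - rTrunc a b ε k n| ≤ (4 / a) * (1 / 2) ^ k := by
  have ha0 : (0:ℝ) < a := lt_trans one_pos ha
  intro k
  induction k with
  | zero =>
    intro n
    have h1 := trunc_bound ha hε hb 1 n
    have h0 := trunc_bound ha hε hb 0 n
    calc |rTrunc a b ε 1 n - rTrunc a b ε 0 n| ≤ |rTrunc a b ε 1 n| + |rTrunc a b ε 0 n| :=
          abs_sub _ _
      _ ≤ 2 / a + 2 / a := add_le_add h1 h0
      _ = (4 / a) * (1 / 2) ^ 0 := by norm_num; ring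
  | succ k ih =>
    intro n
    have hd1 := denom_ge ha hε hb (trunc_bound ha hε hb k (n + 1)) n
    have hd2 := denom_ge ha hε hb (trunc_bound ha hε hb (k + 1) (n + 1)) n
    set d1 := a * ε n + b * rTrunc a b ε k (n + 1) with hd1def
    set d2 := a * ε n + b * rTrunc a b ε (k + 1) (n + 1) with hd2def
    have hd1ne : d1 ≠ 0 := by intro h; rw [h] at hd1; simp at hd1; linarith
    have hd2ne : d2 ≠ 0 := by intro h; rw [h] at hd2; simp at hd2; linarith
    have key : rTrunc a b ε (k + 2) n - rTrunc a b ε (k + 1) n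
        = b * (rTrunc a b ε k (n + 1) - rTrunc a b ε (k + 1) (n + 1)) / (d2 * d1) := by
      show 1 / d2 - 1 / d1 = _
      field_simp
      ring
    rw [key, abs_div, abs_mul, abs_mul]
    have hnum : |b| * |rTrunc a b ε k (n + 1) - rTrunc a b ε (k + 1) (n + 1)|
        ≤ (a ^ 2 / 8) * ((4 / a) * (1 / 2) ^ k) := by
      apply mul_le_mul hb _ (abs_nonneg _) (by positivity)
      rw [abs_sub_comm]
      exact ih (n + 1)
    have hden : (a / 2) * (a / 2) ≤ |d2| * |d1| :=
      mul_le_mul hd2 hd1 (by linarith) (abs_nonneg _)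
    calc |b| * |rTrunc a b ε k (n + 1) - rTrunc a b ε (k + 1) (n + 1)| / (|d2| * |d1|)
        ≤ (a ^ 2 / 8) * ((4 / a) * (1 / 2) ^ k) / ((a / 2) * (a / 2)) :=
          div_le_div₀ (by positivity) hnum (by positivity) hden
      _ = (4 / a) * (1 / 2) ^ (k + 1) := by
          rw [pow_succ]
          field_simp
          ring

lemma trunc_tendsto (ha : 1 < a) (hε : ∀ n : ℤ, ε n = 1 ∨ ε n = -1) (hb : |b| ≤ a ^ 2 / 8)
    (n : ℤ) : Tendsto (fun k => rTrunc a b ε k n) atTop (𝓝 (rCF a b ε n)) := by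
  have hc : CauchySeq (fun k => rTrunc a b ε k n) := by
    apply cauchySeq_of_le_geometric (1 / 2) (4 / a) (by norm_num)
    intro k
    rw [dist_eq_norm, Real.norm_eq_abs, abs_sub_comm]
    exact trunc_cauchy ha hε hb k n
  obtain ⟨x, hx⟩ := cauchySeq_tendsto_of_complete hc
  have heq : rCF a b ε n = x := hx.limUnder_eq
  rwa [heq]

lemma rCF_bound (ha : 1 < a) (hε : ∀ n : ℤ, ε n = 1 ∨ ε n = -1) (hb : |b| ≤ a ^ 2 / 8)
    (n : ℤ) : |rCF a b ε n| ≤ 2 / a :=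
  le_of_tendsto (trunc_tendsto ha hε hb n).abs
    (Eventually.of_forall fun k => trunc_bound ha hε hb k n)

lemma rCF_denom (ha : 1 < a) (hε : ∀ n : ℤ, ε n = 1 ∨ ε n = -1) (hb : |b| ≤ a ^ 2 / 8)
    (n : ℤ) : a / 2 ≤ |a * ε n + b * rCF a b ε (n + 1)| :=
  denom_ge ha hε hb (rCF_bound ha hε hb (n + 1)) n

lemma rCF_denom_ne (ha : 1 < a) (hε : ∀ n : ℤ, ε n = 1 ∨ ε n = -1) (hb : |b| ≤ a ^ 2 / 8)
    (n : ℤ) : a * ε n + b * rCF a b ε (n + 1) ≠ 0 := by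
  have ha0 : (0:ℝ) < a := lt_trans one_pos ha
  intro h
  have := rCF_denom ha hε hb n
  rw [h] at this; simp at this; linarith

lemma rCF_rec (ha : 1 < a) (hε : ∀ n : ℤ, ε n = 1 ∨ ε n = -1) (hb : |b| ≤ a ^ 2 / 8)
    (n : ℤ) : rCF a b ε n = 1 / (a * ε n + b * rCF a b ε (n + 1)) := by
  have h1 : Tendsto (fun k => rTrunc a b ε (k + 1) n) atTop (𝓝 (rCF a b ε n)) :=
    (trunc_tendsto ha hε hb n).comp (tendsto_add_atTop_nat 1)
  have h2 : Tendsto (fun k => 1 / (a * ε n + b * rTrunc a b ε k (n + 1))) atTop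
      (𝓝 (1 / (a * ε n + b * rCF a b ε (n + 1)))) := by
    exact tendsto_const_nhds.div
      (tendsto_const_nhds.add ((trunc_tendsto ha hε hb (n + 1)).const_mul b))
      (rCF_denom_ne ha hε hb n)
  have h1' : Tendsto (fun k => 1 / (a * ε n + b * rTrunc a b ε k (n + 1))) atTop
      (𝓝 (rCF a b ε n)) := h1
  exact tendsto_nhds_unique h1' h2

lemma rCF_zero (ha : 1 < a) (hε : ∀ n : ℤ, ε n = 1 ∨ ε n = -1) (n : ℤ) :
    rCF a 0 ε n = ε n / a := by
  have ha0 : a ≠ 0 := by intro h; rw [h] at ha; linarith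
  have ht : ∀ k (n : ℤ), rTrunc a 0 ε k n = 1 / (a * ε n) := by
    intro k
    induction k with
    | zero => intro n; rfl
    | succ k ih => intro n; rw [rTrunc, zero_mul, add_zero]
  have : rCF a 0 ε n = 1 / (a * ε n) := by
    rw [rCF]
    simp only [ht]
    exact tendsto_const_nhds.limUnder_eq
  rw [this]
  have hεn : ε n ≠ 0 := by rcases hε n with h | h <;> rw [h] <;> norm_num
  rw [div_eq_div_iff (by exact mul_ne_zero ha0 hεn) ha0]
  linear_combination -a * eps_sq hε n

lemma rCF_first_order (ha : 1 < a) (hε : ∀ n : ℤ, ε n = 1 ∨ ε n = -1) (hb : |b| ≤ a ^ 2 / 8)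
    (n : ℤ) : |rCF a b ε n - ε n / a| ≤ 4 / a ^ 3 * |b| := by
  have ha0 : (0:ℝ) < a := lt_trans one_pos ha
  have hd := rCF_denom ha hε hb n
  have hdne := rCF_denom_ne ha hε hb n
  set d := a * ε n + b * rCF a b ε (n + 1) with hddef
  have hu : |a * ε n| = a := by rw [abs_mul, eps_abs hε, mul_one, abs_of_pos ha0]
  have hune : a * ε n ≠ 0 := by intro h; rw [h] at hu; simp at hu; linarith
  have hεa : ε n / a = 1 / (a * ε n) := by
    rw [div_eq_div_iff ha0.ne' hune]
    linear_combination a * eps_sq hε n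
  have key : rCF a b ε n - ε n / a = -(b * rCF a b ε (n + 1)) / (d * (a * ε n)) := by
    rw [rCF_rec ha hε hb n, hεa, ← hddef]
    rw [div_sub_div _ _ hdne hune, hddef]
    ring
  rw [key, abs_div, abs_neg, abs_mul, abs_mul]
  have hnum : |b| * |rCF a b ε (n + 1)| ≤ |b| * (2 / a) :=
    mul_le_mul_of_nonneg_left (rCF_bound ha hε hb (n + 1)) (abs_nonneg b)
  have hden : (a / 2) * a ≤ |d| * |a * ε n| := by
    rw [hu]; exact mul_le_mul_of_nonneg_right hd ha0.le
  calc |b| * |rCF a b ε (n + 1)| / (|d| * |a * ε n|)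
      ≤ |b| * (2 / a) / ((a / 2) * a) := div_le_div₀ (by positivity) hnum (by positivity) hden
    _ = 4 / a ^ 3 * |b| := by field_simp; ring

lemma rCF_second_order (ha : 1 < a) (hε : ∀ n : ℤ, ε n = 1 ∨ ε n = -1) (hb : |b| ≤ a ^ 2 / 8)
    (n : ℤ) : |rCF a b ε n - ε n / a + b * (ε (n + 1) / a ^ 3)| ≤ 12 / a ^ 5 * b ^ 2 := by
  have ha0 : (0:ℝ) < a := lt_trans one_pos ha
  have hd := rCF_denom ha hε hb n
  have hdne := rCF_denom_ne ha hε hb n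
  set r := rCF a b ε (n + 1) with hrdef
  set x := b * r with hxdef
  set u := a * ε n with hudef
  set d := u + x with hddef
  have hu : |u| = a := by rw [hudef, abs_mul, eps_abs hε, mul_one, abs_of_pos ha0]
  have hune : u ≠ 0 := by intro h; rw [h] at hu; simp at hu; linarith
  have hu2 : u ^ 2 = a ^ 2 := by
    rw [hudef]; have := eps_sq hε n; nlinarith
  have hεa : ε n / a = 1 / u := by
    rw [hudef, div_eq_div_iff ha0.ne' (by rwa [hudef] at hune)]
    linear_combination a * eps_sq hε n
  have hA : rCF a b ε n - ε n / a + x / u ^ 2 = x ^ 2 / (u ^ 2 * d) := by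
    rw [rCF_rec ha hε hb n, hεa]
    have : a * ε n + b * rCF a b ε (n + 1) = d := rfl
    rw [this]
    have hdne' : d ≠ 0 := hdne
    field_simp
    ring
  have hB : b * (ε (n + 1) / a ^ 3) - x / u ^ 2 = -(b / a ^ 2) * (r - ε (n + 1) / a) := by
    rw [hu2, hxdef]
    field_simp
    ring
  have hkey : rCF a b ε n - ε n / a + b * (ε (n + 1) / a ^ 3)
      = x ^ 2 / (u ^ 2 * d) + -(b / a ^ 2) * (r - ε (n + 1) / a) := by
    rw [← hA, ← hB]; ring
  rw [hkey]
  have hxb : |x| ≤ |b| * (2 / a) := by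
    rw [hxdef, abs_mul]
    exact mul_le_mul_of_nonneg_left (rCF_bound ha hε hb (n + 1)) (abs_nonneg b)
  have h1 : |x ^ 2 / (u ^ 2 * d)| ≤ 8 / a ^ 5 * b ^ 2 := by
    have hden_eq : |u ^ 2 * d| = a ^ 2 * |d| := by rw [abs_mul, abs_pow, hu]
    rw [abs_div, hden_eq, abs_pow]
    have hnum : |x| ^ 2 ≤ (|b| * (2 / a)) ^ 2 := by
      apply pow_le_pow_left₀ (abs_nonneg x) hxb
    have hden : a ^ 2 * (a / 2) ≤ a ^ 2 * |d| := by
      apply mul_le_mul_of_nonneg_left hd (by positivity)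
    calc |x| ^ 2 / (a ^ 2 * |d|) ≤ (|b| * (2 / a)) ^ 2 / (a ^ 2 * (a / 2)) :=
          div_le_div₀ (by positivity) hnum (by positivity) hden
      _ = 8 / a ^ 5 * b ^ 2 := by
          rw [mul_pow, ← abs_pow, abs_of_nonneg (sq_nonneg b)]
          field_simp; ring
  have h2 : |-(b / a ^ 2) * (r - ε (n + 1) / a)| ≤ 4 / a ^ 5 * b ^ 2 := by
    rw [abs_mul, abs_neg, abs_div, abs_pow, abs_of_pos ha0]
    calc |b| / a ^ 2 * |r - ε (n + 1) / a| ≤ |b| / a ^ 2 * (4 / a ^ 3 * |b|) := by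
          apply mul_le_mul_of_nonneg_left (rCF_first_order ha hε hb (n + 1)) (by positivity)
      _ = 4 / a ^ 5 * b ^ 2 := by
          rw [show |b| / a ^ 2 * (4 / a ^ 3 * |b|) = 4 / a ^ 5 * (|b| * |b|) by ring,
            abs_mul_abs_self, ← sq]
  calc |x ^ 2 / (u ^ 2 * d) + -(b / a ^ 2) * (r - ε (n + 1) / a)|
      ≤ |x ^ 2 / (u ^ 2 * d)| + |-(b / a ^ 2) * (r - ε (n + 1) / a)| := abs_add_le _ _
    _ ≤ 8 / a ^ 5 * b ^ 2 + 4 / a ^ 5 * b ^ 2 := add_le_add h1 h2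
    _ = 12 / a ^ 5 * b ^ 2 := by ring

lemma hasDerivAt_rCF (ha : 1 < a) (hε : ∀ n : ℤ, ε n = 1 ∨ ε n = -1) (n : ℤ) :
    HasDerivAt (fun b => rCF a b ε n) (-(ε (n + 1)) / a ^ 3) 0 := by
  have ha0 : (0:ℝ) < a := lt_trans one_pos ha
  rw [hasDerivAt_iff_isLittleO]
  simp only [sub_zero, smul_eq_mul, rCF_zero ha hε]
  have h1 : (fun b : ℝ => rCF a b ε n - ε n / a - b * (-(ε (n + 1)) / a ^ 3))
      =O[𝓝 0] (fun b => b ^ 2) := by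
    rw [isBigO_iff]
    refine ⟨12 / a ^ 5, ?_⟩
    have hev : ∀ᶠ b : ℝ in 𝓝 0, |b| ≤ a ^ 2 / 8 := by
      filter_upwards [Metric.ball_mem_nhds (0:ℝ) (show (0:ℝ) < a ^ 2 / 8 by positivity)]
        with b hb
      simp only [Metric.mem_ball, Real.dist_eq, sub_zero] at hb
      exact hb.le
    filter_upwards [hev] with b hb
    rw [Real.norm_eq_abs, Real.norm_eq_abs, abs_of_nonneg (sq_nonneg b)]
    have heq : rCF a b ε n - ε n / a - b * (-(ε (n + 1)) / a ^ 3)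
        = rCF a b ε n - ε n / a + b * (ε (n + 1) / a ^ 3) := by ring
    rw [heq]
    exact rCF_second_order ha hε hb n
  have h2 : (fun b : ℝ => b ^ 2) =o[𝓝 0] (fun b : ℝ => b) := by
    simpa using isLittleO_pow_pow (𝕜 := ℝ) (by norm_num : 1 < 2)
  exact h1.trans_isLittleO h2

end Aux

theorem deriv_T_n_at_zero :
    ∀ a : ℝ, 1 < a → ∀ ε : ℤ → ℝ, (∀ n : ℤ, ε n = 1 ∨ ε n = -1) →
      ∀ n : ℕ, 2 ≤ n →
        HasDerivAt (fun b => ∏ j ∈ Finset.range (n + 1), rCF a b ε (j : ℤ))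
          (-(1 / a ^ (n + 3)) *
            ((∑ i ∈ Finset.range n,
                ∏ j ∈ Finset.range (n + 1) \ {i, i + 1}, ε (j : ℤ)) +
              ∏ j ∈ Finset.range (n + 2) \ {n}, ε (j : ℤ))) 0 := by
  intro a ha ε hε n hn
  have ha0 : (0:ℝ) < a := lt_trans one_pos ha
  have key := HasDerivAt.fun_finsetProd (u := Finset.range (n + 1))
    (f := fun (j : ℕ) (b : ℝ) => rCF a b ε (j : ℤ))
    (f' := fun j : ℕ => -(ε ((j : ℤ) + 1)) / a ^ 3)
    (x := 0) (fun i _ => hasDerivAt_rCF ha hε (i : ℤ))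
  refine HasDerivAt.congr_deriv key ?_
  symm
  simp only [rCF_zero ha hε, smul_eq_mul]
  have hterm : ∀ i ∈ Finset.range (n + 1),
      (∏ j ∈ (Finset.range (n + 1)).erase i, (ε (j : ℤ) / a)) * (-(ε ((i : ℤ) + 1)) / a ^ 3)
      = -(1 / a ^ (n + 3)) *
          (ε ((i : ℤ) + 1) * ∏ j ∈ (Finset.range (n + 1)).erase i, ε (j : ℤ)) := by
    intro i hi
    rw [Finset.prod_div_distrib, Finset.prod_const, Finset.card_erase_of_mem hi,
      Finset.card_range, Nat.add_sub_cancel, pow_add]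
    field_simp
  rw [Finset.sum_congr rfl hterm, ← Finset.mul_sum]
  congr 1
  rw [Finset.sum_range_succ]
  congr 1
  · apply Finset.sum_congr rfl
    intro i hi
    have hi' : i < n := Finset.mem_range.mp hi
    have hset : (Finset.range (n + 1)).erase i
        = insert (i + 1) (Finset.range (n + 1) \ {i, i + 1}) := by
      ext j
      simp only [Finset.mem_erase, Finset.mem_range, Finset.mem_insert, Finset.mem_sdiff,
        Finset.mem_singleton]
      omega
    rw [hset, Finset.prod_insert (by simp)]
    push_cast
    rw [← mul_assoc, eps_sq hε, one_mul]
  · have hset : Finset.range (n + 2) \ {n} = insert (n + 1) ((Finset.range (n + 1)).erase n) := by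
      ext j
      simp only [Finset.mem_erase, Finset.mem_range, Finset.mem_insert, Finset.mem_sdiff,
        Finset.mem_singleton]
      omega
    rw [hset, Finset.prod_insert (by simp)]
    push_cast
    ring
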